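/- Let (T, S) be a ribbon graph of size g with ribbon matrix R and half Alexander polynomial ρ(X). Suppose v is a pendant vertex (degree 1) of T that is not in the image of S, with unique incident edge e_i. Let (T', S') be the ribbon graph of size g−1 obtained by the R0-reduction: delete v and e_i from T, and let S' be the restriction of S to the remaining edges. Then the half Alexander polynomial ρ'(X) of (T', S') satisfies ρ'(X) = ε·X^k·ρ(X) in ℚ(X) for some ε ∈ {1, −1} and some k ∈ {−1, 0, 1}; consequently the Conway-normalized Alexander polynomials agree: ρ'(X)·ρ'(X⁻¹) = ρ(X)·ρ(X⁻¹). -/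

import Mathlib

open Matrix Polynomial

/-- A ribbon graph: a directed tree `T` (vertex type `V`, edge type `E`, each edge `e`
having a `tail` and a `head`, the underlying undirected graph being a tree, so that
`card V = card E + 1`) together with a singularity map `S` from edges to vertices. -/
structure RibbonGraph (V E : Type) [Fintype V] [DecidableEq V] [Fintype E] [DecidableEq E] where
  /-- the tail of each directed edge -/
  tail : E → V
  /-- the head of each directed edge -/
  head : E → V
  /-- the singularity map -/
  S : E → V
  no_loop : ∀ e, tail e ≠ head e
  edge_inj : Function.Injective fun e => s(tail e, head e)
  connected : (SimpleGraph.fromRel fun a b => ∃ e, tail e = a ∧ head e = b).Connected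
  card_eq : Fintype.card V = Fintype.card E + 1

variable {V E : Type} [Fintype V] [DecidableEq V] [Fintype E] [DecidableEq E]

/-- The underlying undirected graph of the tree with the edge `j` removed. -/
def RibbonGraph.without (G : RibbonGraph V E) (j : E) : SimpleGraph V :=
  SimpleGraph.fromRel fun a b => ∃ e, e ≠ j ∧ G.tail e = a ∧ G.head e = b

open Classical in
/-- The ribbon matrix of a ribbon graph `(T, S)`: subdividing edge `eᵢ` by a midpoint
`v_{eᵢ}` and letting `Pᵢ` be the unique path from `v_{eᵢ}` to `S(eᵢ)` in the subdivided
tree, we set `Rᵢᵢ = ±1/2` according to whether the first step of `Pᵢ` is towards the head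
or the tail of `eᵢ` (equivalently, whether `S(eᵢ)` lies in the head or tail component of
`T - eᵢ`), and for `j ≠ i`, `Rⱼᵢ = 1` (resp. `-1`, `0`) if `Pᵢ` traverses `eⱼ` from tail
to head (resp. from head to tail, not at all); equivalently, `Rⱼᵢ = 1` iff in `T - eⱼ`
the edge `eᵢ` lies in the tail component and `S(eᵢ)` in the head component, `Rⱼᵢ = -1`
in the opposite case, and `Rⱼᵢ = 0` if `eᵢ` and `S(eᵢ)` are on the same side of `eⱼ`. -/
noncomputable def RibbonGraph.ribbonMatrix (G : RibbonGraph V E) : Matrix E E ℚ :=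
  fun j i =>
    if j = i then
      (if (G.without i).Reachable (G.S i) (G.head i) then (1/2 : ℚ) else -(1/2))
    else if (G.without j).Reachable (G.tail i) (G.tail j) ∧
            (G.without j).Reachable (G.S i) (G.head j) then 1
    else if (G.without j).Reachable (G.tail i) (G.head j) ∧
            (G.without j).Reachable (G.S i) (G.tail j) then -1
    else 0

/-- The half Alexander polynomial `ρ(X) = det((X-1)·R - (1/2)(X+1)·I)` of a ribbon
graph with ribbon matrix `R`. -/
noncomputable def RibbonGraph.halfAlex (G : RibbonGraph V E) : Polynomial ℚ :=
  ((X - 1 : ℚ[X]) • G.ribbonMatrix.map C -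
    (C (1/2 : ℚ) * (X + 1)) • (1 : Matrix E E ℚ[X])).det

/-- The Conway-normalized Alexander polynomial `Δ(X) = ρ(X)·ρ(X⁻¹)` of a ribbon graph,
as an element of the field of rational functions `ℚ(X)`. -/
noncomputable def RibbonGraph.conwayAlex (G : RibbonGraph V E) : RatFunc ℚ :=
  algebraMap ℚ[X] (RatFunc ℚ) G.halfAlex *
    G.halfAlex.eval₂ (algebraMap ℚ (RatFunc ℚ)) (RatFunc.X)⁻¹

/-- In `G.without i`, a pendant vertex `v` whose only incident edge is `i` is isolated:
anything reachable to `v` equals `v`. -/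
lemma RibbonGraph.isolated_of_pendant (G : RibbonGraph V E) (v : V) (i : E)
    (hpend : ∀ e : E, (G.tail e = v ∨ G.head e = v) ↔ e = i) :
    ∀ x, (G.without i).Reachable x v → x = v := by
  intro x hx
  obtain ⟨p⟩ := hx.symm
  cases p with
  | nil => rfl
  | cons h _ =>
    rw [RibbonGraph.without, SimpleGraph.fromRel_adj] at h
    obtain ⟨-, ⟨e, he, h1, h2⟩ | ⟨e, he, h1, h2⟩⟩ := h
    · exact absurd ((hpend e).1 (Or.inl h1)) he
    · exact absurd ((hpend e).1 (Or.inr h2)) he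

/-- Reachability transfer between `G.without j` and `G'.without j` for the R0-reduction. -/
lemma RibbonGraph.reach_transfer (G : RibbonGraph V E) (v : V) (i : E)
    (hpend : ∀ e : E, (G.tail e = v ∨ G.head e = v) ↔ e = i)
    (G' : RibbonGraph {u : V // u ≠ v} {e : E // e ≠ i})
    (htail : ∀ e : {e : E // e ≠ i}, (G'.tail e : V) = G.tail e)
    (hhead : ∀ e : {e : E // e ≠ i}, (G'.head e : V) = G.head e)
    (j : {e : E // e ≠ i}) (a b : {u : V // u ≠ v}) :
    (G.without j.val).Reachable a.val b.val ↔ (G'.without j).Reachable a b := by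
  constructor
  · intro h
    have hiv : G.tail i = v ∨ G.head i = v := (hpend i).2 rfl
    obtain ⟨u₀, hu₀⟩ : ∃ u₀ : {u : V // u ≠ v},
        (G.tail i = v ∧ (u₀ : V) = G.head i) ∨ (G.head i = v ∧ (u₀ : V) = G.tail i) := by
      rcases hiv with h' | h'
      · exact ⟨⟨G.head i, fun hh => G.no_loop i (h'.trans hh.symm)⟩, Or.inl ⟨h', rfl⟩⟩
      · exact ⟨⟨G.tail i, fun hh => G.no_loop i (hh.trans h'.symm)⟩, Or.inr ⟨h', rfl⟩⟩
    classical
    let f : V → {u : V // u ≠ v} := fun x => if hx : x = v then u₀ else ⟨x, hx⟩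
    have main : ∀ x y : V, x ≠ y → (∃ e, e ≠ j.val ∧ G.tail e = x ∧ G.head e = y) →
        (G'.without j).Reachable (f x) (f y) := by
      rintro x y hxy' ⟨e, hej, h1, h2⟩
      by_cases hei : e = i
      · rw [hei] at h1 h2
        have hfeq : f x = f y := by
          rcases hu₀ with ⟨hti, hu⟩ | ⟨hhi, hu⟩
          · have hx : x = v := h1.symm.trans hti
            have hy : y ≠ v := fun hh => G.no_loop i (hti.trans (h2.trans hh).symm)
            rw [show f x = u₀ from dif_pos hx, show f y = ⟨y, hy⟩ from dif_neg hy]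
            exact Subtype.ext (hu.trans h2)
          · have hy : y = v := h2.symm.trans hhi
            have hx : x ≠ v := fun hh => G.no_loop i ((h1.trans hh).trans hhi.symm)
            rw [show f y = u₀ from dif_pos hy, show f x = ⟨x, hx⟩ from dif_neg hx]
            exact (Subtype.ext (hu.trans h1)).symm
        rw [hfeq]
      · have hx : x ≠ v := fun hh => hei ((hpend e).1 (Or.inl (h1.trans hh)))
        have hy : y ≠ v := fun hh => hei ((hpend e).1 (Or.inr (h2.trans hh)))
        apply SimpleGraph.Adj.reachable
        rw [RibbonGraph.without, SimpleGraph.fromRel_adj]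
        refine ⟨?_, Or.inl ⟨⟨e, hei⟩, fun hh => hej (congrArg Subtype.val hh), ?_, ?_⟩⟩
        · rw [show f x = ⟨x, hx⟩ from dif_neg hx, show f y = ⟨y, hy⟩ from dif_neg hy]
          exact fun hh => hxy' (congrArg Subtype.val hh)
        · rw [show f x = ⟨x, hx⟩ from dif_neg hx]
          exact Subtype.ext ((htail ⟨e, hei⟩).trans h1)
        · rw [show f y = ⟨y, hy⟩ from dif_neg hy]
          exact Subtype.ext ((hhead ⟨e, hei⟩).trans h2)
    have step : ∀ x y : V, (G.without j.val).Adj x y →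
        (G'.without j).Reachable (f x) (f y) := by
      intro x y hxy
      rw [RibbonGraph.without, SimpleGraph.fromRel_adj] at hxy
      obtain ⟨hne, hr | hr⟩ := hxy
      · exact main x y hne hr
      · exact (main y x hne.symm hr).symm
    obtain ⟨p⟩ := h
    have hw : ∀ {x y : V} (_ : (G.without j.val).Walk x y),
        (G'.without j).Reachable (f x) (f y) := by
      intro x y p
      induction p with
      | nil => exact SimpleGraph.Reachable.refl _
      | cons hadj _ ih => exact (step _ _ hadj).trans ih
    have hfin := hw p
    rwa [show f a.val = a from dif_neg a.2, show f b.val = b from dif_neg b.2] at hfin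
  · intro h
    have hmap : ∀ ⦃x y : {u : V // u ≠ v}⦄, (G'.without j).Adj x y →
        (G.without j.val).Adj x.val y.val := by
      intro x y hxy
      rw [RibbonGraph.without, SimpleGraph.fromRel_adj] at hxy ⊢
      obtain ⟨hne, hr⟩ := hxy
      refine ⟨fun hh => hne (Subtype.ext hh), ?_⟩
      rcases hr with ⟨e, hej, h1, h2⟩ | ⟨e, hej, h1, h2⟩
      · exact Or.inl ⟨e.val, fun hh => hej (Subtype.ext hh),
          by rw [← htail, h1], by rw [← hhead, h2]⟩
      · exact Or.inr ⟨e.val, fun hh => hej (Subtype.ext hh),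
          by rw [← htail, h1], by rw [← hhead, h2]⟩
    exact SimpleGraph.Reachable.map ⟨Subtype.val, fun h => hmap h⟩ h

/-- The ribbon matrix of `G'` is the restriction of that of `G`. -/
lemma RibbonGraph.ribbonMatrix_transfer (G : RibbonGraph V E) (v : V) (i : E)
    (hpend : ∀ e : E, (G.tail e = v ∨ G.head e = v) ↔ e = i)
    (hv : ∀ e : E, G.S e ≠ v)
    (G' : RibbonGraph {u : V // u ≠ v} {e : E // e ≠ i})
    (htail : ∀ e : {e : E // e ≠ i}, (G'.tail e : V) = G.tail e)
    (hhead : ∀ e : {e : E // e ≠ i}, (G'.head e : V) = G.head e)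
    (hS : ∀ e : {e : E // e ≠ i}, (G'.S e : V) = G.S e) :
    ∀ j k : {e : E // e ≠ i}, G'.ribbonMatrix j k = G.ribbonMatrix j.val k.val := by
  classical
  intro j k
  have T := RibbonGraph.reach_transfer G v i hpend G' htail hhead
  have hS' : ∀ e : {e : E // e ≠ i},
      G'.S e = (⟨G.S e.val, hv e.val⟩ : {u : V // u ≠ v}) := fun e => Subtype.ext (hS e)
  have hT' : ∀ e : {e : E // e ≠ i}, G'.tail e =
      (⟨G.tail e.val, fun hh => e.2 ((hpend e.val).1 (Or.inl hh))⟩ : {u : V // u ≠ v}) :=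
    fun e => Subtype.ext (htail e)
  have hH' : ∀ e : {e : E // e ≠ i}, G'.head e =
      (⟨G.head e.val, fun hh => e.2 ((hpend e.val).1 (Or.inr hh))⟩ : {u : V // u ≠ v}) :=
    fun e => Subtype.ext (hhead e)
  simp only [RibbonGraph.ribbonMatrix]
  by_cases hjk : j = k
  · rw [if_pos hjk, if_pos (congrArg Subtype.val hjk)]
    refine if_congr ?_ rfl rfl
    rw [hS' k, hH' k]
    exact (T k _ _).symm
  · have hjk' : j.val ≠ k.val := fun hh => hjk (Subtype.ext hh)
    rw [if_neg hjk, if_neg hjk']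
    refine if_congr (and_congr ?_ ?_) rfl (if_congr (and_congr ?_ ?_) rfl rfl)
    · rw [hT' k, hT' j]; exact (T j _ _).symm
    · rw [hS' k, hH' j]; exact (T j _ _).symm
    · rw [hT' k, hH' j]; exact (T j _ _).symm
    · rw [hS' k, hT' j]; exact (T j _ _).symm

/-- R0-reduction: if `v` is a pendant vertex of `T` not in the image of
`S`, with unique incident edge `i`, and `(T', S')` is obtained by deleting `v` and `i`
and restricting `S`, then the half Alexander polynomial changes only by `ε·X^k` with
`ε ∈ {1, -1}` and `k ∈ {-1, 0, 1}`; consequently the Conway-normalized Alexander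
polynomials agree. -/
theorem RibbonGraph.r0_reduction (G : RibbonGraph V E) (v : V) (i : E)
    (hpend : ∀ e : E, (G.tail e = v ∨ G.head e = v) ↔ e = i)
    (hv : ∀ e : E, G.S e ≠ v)
    (G' : RibbonGraph {u : V // u ≠ v} {e : E // e ≠ i})
    (htail : ∀ e : {e : E // e ≠ i}, (G'.tail e : V) = G.tail e)
    (hhead : ∀ e : {e : E // e ≠ i}, (G'.head e : V) = G.head e)
    (hS : ∀ e : {e : E // e ≠ i}, (G'.S e : V) = G.S e) :
    (∃ (ε : ℚ) (k : ℤ), (ε = 1 ∨ ε = -1) ∧ (k = -1 ∨ k = 0 ∨ k = 1) ∧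
      algebraMap ℚ[X] (RatFunc ℚ) G'.halfAlex =
        RatFunc.C ε * RatFunc.X ^ k * algebraMap ℚ[X] (RatFunc ℚ) G.halfAlex) ∧
    G'.conwayAlex = G.conwayAlex := by
  classical
  set M : Matrix E E ℚ[X] := (X - 1 : ℚ[X]) • G.ribbonMatrix.map C -
    (C (1/2 : ℚ) * (X + 1)) • (1 : Matrix E E ℚ[X]) with hM
  set M' : Matrix {e : E // e ≠ i} {e : E // e ≠ i} ℚ[X] :=
    (X - 1 : ℚ[X]) • G'.ribbonMatrix.map C -
      (C (1/2 : ℚ) * (X + 1)) • (1 : Matrix {e : E // e ≠ i} {e : E // e ≠ i} ℚ[X]) with hM'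
  have iso := RibbonGraph.isolated_of_pendant G v i hpend
  have hiv : G.tail i = v ∨ G.head i = v := (hpend i).2 rfl
  -- row i of the ribbon matrix vanishes off the diagonal
  have hrow : ∀ k : E, k ≠ i → G.ribbonMatrix i k = 0 := by
    intro k hk
    have hSk : G.S k ≠ v := hv k
    have htk : G.tail k ≠ v := fun h => hk ((hpend k).1 (Or.inl h))
    simp only [RibbonGraph.ribbonMatrix]
    rw [if_neg (Ne.symm hk)]
    rcases hiv with hvi | hvi
    · rw [if_neg, if_neg]
      · rintro ⟨h1, h2⟩
        rw [hvi] at h2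
        exact hSk (iso _ h2)
      · rintro ⟨h1, h2⟩
        rw [hvi] at h1
        exact htk (iso _ h1)
    · rw [if_neg, if_neg]
      · rintro ⟨h1, h2⟩
        rw [hvi] at h1
        exact htk (iso _ h1)
      · rintro ⟨h1, h2⟩
        rw [hvi] at h2
        exact hSk (iso _ h2)
  -- auxiliary constant computation
  have hC2 : (C (1/2 : ℚ) : ℚ[X]) * 2 = 1 := by
    rw [show ((2 : ℚ[X]) = C 2) from (map_ofNat C 2).symm, ← C_mul]
    norm_num
  have hMii : M i i = (X - 1) * C (G.ribbonMatrix i i) - C (1/2 : ℚ) * (X + 1) := by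
    simp [hM, Matrix.sub_apply, Matrix.smul_apply, Matrix.map_apply, Matrix.one_apply_eq,
      smul_eq_mul]
  have hdiag : M i i = -1 ∨ M i i = -X := by
    by_cases hre : (G.without i).Reachable (G.S i) (G.head i)
    · left
      have h12 : G.ribbonMatrix i i = 1/2 := by
        simp only [RibbonGraph.ribbonMatrix]
        rw [if_pos trivial, if_pos hre]
      rw [hMii, h12]
      linear_combination -hC2
    · right
      have h12 : G.ribbonMatrix i i = -(1/2) := by
        simp only [RibbonGraph.ribbonMatrix]
        rw [if_pos trivial, if_neg hre]
      rw [hMii, h12, map_neg]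
      linear_combination (-X : ℚ[X]) * hC2
  -- determinant factorization
  have hmat := RibbonGraph.ribbonMatrix_transfer G v i hpend hv G' htail hhead hS
  haveI hU : Unique {e : E // ¬ e ≠ i} :=
    ⟨⟨⟨i, not_ne_iff.2 rfl⟩⟩, fun x => Subtype.ext (not_not.1 x.2)⟩
  have hdet : G.halfAlex = G'.halfAlex * M i i := by
    have hblock : M.submatrix (Equiv.sumCompl (· ≠ i)) (Equiv.sumCompl (· ≠ i)) =
        Matrix.fromBlocks M'
          (Matrix.of fun j y => M j.val y.val) 0 (Matrix.of fun x y => M x.val y.val) := by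
      ext x y : 1
      cases x with
      | inl j =>
        cases y with
        | inl k =>
          simp only [Matrix.submatrix_apply, Equiv.sumCompl_apply_inl,
            Matrix.fromBlocks_apply₁₁, hM, hM', Matrix.sub_apply, Matrix.smul_apply,
            Matrix.map_apply, smul_eq_mul, Matrix.one_apply, Subtype.ext_iff]
          rw [hmat j k]
        | inr y' =>
          simp only [Matrix.submatrix_apply, Equiv.sumCompl_apply_inl,
            Equiv.sumCompl_apply_inr, Matrix.fromBlocks_apply₁₂, Matrix.of_apply]
      | inr x' =>
        have hx' : x'.val = i := not_not.1 x'.2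
        cases y with
        | inl k =>
          simp only [Matrix.submatrix_apply, Equiv.sumCompl_apply_inl,
            Equiv.sumCompl_apply_inr, Matrix.fromBlocks_apply₂₁, Matrix.zero_apply]
          rw [hx']
          have hki : k.val ≠ i := k.2
          simp only [hM, Matrix.sub_apply, Matrix.smul_apply, Matrix.map_apply,
            smul_eq_mul, Matrix.one_apply, if_neg (Ne.symm hki), hrow k.val hki]
          simp
        | inr y' =>
          simp only [Matrix.submatrix_apply, Equiv.sumCompl_apply_inr,
            Matrix.fromBlocks_apply₂₂, Matrix.of_apply]
    have h1 : G.halfAlex = M.det := by rw [RibbonGraph.halfAlex, hM]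
    have h2 : G'.halfAlex = M'.det := by rw [RibbonGraph.halfAlex, hM']
    rw [h1, h2, ← Matrix.det_submatrix_equiv_self (Equiv.sumCompl (· ≠ i)) M, hblock,
      Matrix.det_fromBlocks_zero₂₁]
    congr 1
    rw [Matrix.det_unique, Matrix.of_apply]
    have hdef : ((default : {e : E // ¬ e ≠ i}) : E) = i :=
      not_not.1 (default : {e : E // ¬ e ≠ i}).2
    rw [hdef]
  -- conclusion
  rcases hdiag with hd | hd
  · have hρ : G.halfAlex = -G'.halfAlex := by rw [hdet, hd]; ring
    constructor
    · refine ⟨-1, 0, Or.inr rfl, Or.inr (Or.inl rfl), ?_⟩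
      rw [hρ, _root_.map_neg (algebraMap ℚ[X] (RatFunc ℚ)), _root_.map_neg RatFunc.C,
        _root_.map_one, zpow_zero]
      ring
    · simp only [RibbonGraph.conwayAlex, hρ, _root_.map_neg, eval₂_neg]
      ring
  · have hρ : G.halfAlex = G'.halfAlex * (-X) := by rw [hdet, hd]
    have hXne : (RatFunc.X : RatFunc ℚ) ≠ 0 := RatFunc.X_ne_zero
    constructor
    · refine ⟨-1, -1, Or.inr rfl, Or.inl rfl, ?_⟩
      rw [hρ, _root_.map_mul, _root_.map_neg (algebraMap ℚ[X] (RatFunc ℚ)),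
        RatFunc.algebraMap_X, _root_.map_neg RatFunc.C, _root_.map_one]
      rw [show ((-1 : ℤ) = -(1:ℤ)) from rfl, _root_.zpow_neg, zpow_one]
      field_simp
    · simp only [RibbonGraph.conwayAlex, hρ, _root_.map_mul, _root_.map_neg,
        RatFunc.algebraMap_X, eval₂_mul, eval₂_neg, eval₂_X]
      field_simp
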